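/- arXiv:2007.15549 — 3 statements merged into one kernel-verified Lean document; each statement's English description precedes it below -/
import Mathlib

section
/- Let n ≥ 1 and let β : ℝ^{1+n} → ℂ be integrable with compact support. If the Fourier transform β̂(τ,ξ) = 0 for every (τ,ξ) ∈ ℝ × ℝⁿ with |τ| ≤ ‖ξ‖, then β = 0 almost everywhere. -/
open MeasureTheory Real Complex Filter
open scoped Topology RealInnerProductSpace FourierTransform ContDiff

lemma aux_toSchwartz {V : Type*} [NormedAddCommGroup V] [NormedSpace ℝ V]
    (g : V → ℂ) (hg : ContDiff ℝ ∞ g) (hsupp : HasCompactSupport g)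
    (k m : ℕ) : ∃ C, ∀ x, ‖x‖ ^ k * ‖iteratedFDeriv ℝ m g x‖ ≤ C := by
  have hc : Continuous (fun x => ‖x‖ ^ k * ‖iteratedFDeriv ℝ m g x‖) :=
    (continuous_norm.pow k).mul (hg.continuous_iteratedFDeriv (by exact_mod_cast le_top)).norm
  have hs : HasCompactSupport (fun x => ‖x‖ ^ k * ‖iteratedFDeriv ℝ m g x‖) :=
    ((hsupp.iteratedFDeriv m).norm).mul_left
  obtain ⟨C, hC⟩ := hc.bounded_above_of_compact_support hs
  exact ⟨C, fun x => (le_abs_self _).trans ((Real.norm_eq_abs _ ▸ hC x))⟩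

lemma fourier_inj {V : Type*} [NormedAddCommGroup V] [InnerProductSpace ℝ V]
    [FiniteDimensional ℝ V] [MeasurableSpace V] [BorelSpace V]
    (f : V → ℂ) (hf : Integrable f) (h0 : ∀ w, 𝓕 f w = 0) :
    ∀ᵐ x, f x = 0 := by
  apply ae_eq_zero_of_integral_contDiff_smul_eq_zero hf.locallyIntegrable
  intro g gsmooth gsupp
  have gcsm : ContDiff ℝ ∞ (fun x => (g x : ℂ)) :=
    Complex.ofRealCLM.contDiff.comp gsmooth
  have gcsupp : HasCompactSupport (fun x => (g x : ℂ)) :=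
    gsupp.comp_left (g := Complex.ofReal) Complex.ofReal_zero
  let G : SchwartzMap V ℂ := ⟨fun x => (g x : ℂ), gcsm, aux_toSchwartz _ gcsm gcsupp⟩
  let H : SchwartzMap V ℂ := (SchwartzMap.fourierTransformCLE ℂ (SchwartzMap V ℂ) (F := SchwartzMap V ℂ)).symm G
  have h2 : SchwartzMap.fourierTransformCLE ℂ (SchwartzMap V ℂ) (F := SchwartzMap V ℂ) H = G :=
    (SchwartzMap.fourierTransformCLE ℂ (SchwartzMap V ℂ) (F := SchwartzMap V ℂ)).apply_symm_apply G
  have hH : 𝓕 ⇑H = fun x => (g x : ℂ) := by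
    calc 𝓕 ⇑H = ⇑(SchwartzMap.fourierTransformCLE ℂ (SchwartzMap V ℂ) (F := SchwartzMap V ℂ) H) :=
          (SchwartzMap.fourier_coe H).symm
      _ = fun x => (g x : ℂ) := by rw [h2]; rfl
  have hflip : (innerₗ V).flip = innerₗ V := by
    ext v w; exact real_inner_comm v w
  have key : ∫ x, (𝓕 ⇑H) x • f x = ∫ x, H x • (𝓕 f) x := by
    have hL : Continuous fun p : V × V => (innerₗ V) p.1 p.2 := continuous_inner
    have := VectorFourier.integral_fourierIntegral_smul_eq_flip (e := 𝐞)
      (L := innerₗ V) (μ := (volume : Measure V)) (ν := (volume : Measure V))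
      Real.continuous_fourierChar hL H.integrable hf
    rw [hflip] at this
    exact this
  calc ∫ x, g x • f x = ∫ x, (𝓕 ⇑H) x • f x := by
        rw [hH]
        refine integral_congr_ae (Filter.Eventually.of_forall fun x => ?_)
        simp [Complex.real_smul]
    _ = ∫ x, H x • (𝓕 f) x := key
    _ = 0 := by simp [h0]

lemma norm_exp_aux (z : ℂ) (t : ℝ) :
    ‖Complex.exp (Complex.I * z * t)‖ ≤ Real.exp (‖z‖ * |t|) := by
  rw [Complex.norm_exp]
  apply Real.exp_le_exp.2
  have hre : (Complex.I * z * (t : ℂ)).re = -z.im * t := by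
    simp [Complex.mul_re]
  rw [hre]
  calc -z.im * t ≤ |(-z.im) * t| := le_abs_self _
    _ = |z.im| * |t| := by rw [abs_mul, abs_neg]
    _ ≤ ‖z‖ * |t| := by
        gcongr
        exact Complex.abs_im_le_norm z

lemma entire_aux (h : ℝ → ℂ) (hint : Integrable h) (hsupp : HasCompactSupport h) :
    Differentiable ℂ (fun z : ℂ => ∫ t : ℝ, Complex.exp (Complex.I * z * t) * h t) := by
  intro z₀
  obtain ⟨R, hR0, hR⟩ : ∃ R, 0 ≤ R ∧ tsupport h ⊆ Metric.closedBall 0 R := by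
    obtain ⟨R, hR⟩ := hsupp.isBounded.subset_closedBall 0
    exact ⟨max R 0, le_max_right _ _,
      hR.trans (Metric.closedBall_subset_closedBall (le_max_left _ _))⟩
  have hsmall : ∀ t : ℝ, h t ≠ 0 → |t| ≤ R := by
    intro t ht
    have : t ∈ tsupport h := subset_tsupport h ht
    simpa [Real.norm_eq_abs] using hR this
  set F : ℂ → ℝ → ℂ := fun z t => Complex.exp (Complex.I * z * t) * h t with hF
  set F' : ℂ → ℝ → ℂ := fun z t => Complex.exp (Complex.I * z * t) * (Complex.I * t) * h t
    with hF'
  have hmeas : ∀ z : ℂ, AEStronglyMeasurable (F z) volume := fun z =>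
    (Complex.continuous_exp.comp (by continuity : Continuous fun t : ℝ =>
      Complex.I * z * (t : ℂ))).aestronglyMeasurable.mul hint.1
  have hmeas' : AEStronglyMeasurable (F' z₀) volume := by
    refine AEStronglyMeasurable.mul ?_ hint.1
    exact Continuous.aestronglyMeasurable (by continuity)
  have hFint : Integrable (F z₀) volume := by
    refine (hint.norm.const_mul (Real.exp (‖z₀‖ * R))).mono' (hmeas z₀)
      (Filter.Eventually.of_forall fun t => ?_)
    by_cases ht : h t = 0
    · simp [hF, ht]
    · have hb : ‖Complex.exp (Complex.I * z₀ * t)‖ ≤ Real.exp (‖z₀‖ * R) :=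
        (norm_exp_aux z₀ t).trans (Real.exp_le_exp.2
          (mul_le_mul_of_nonneg_left (hsmall t ht) (norm_nonneg z₀)))
      calc ‖F z₀ t‖ = ‖Complex.exp (Complex.I * z₀ * t)‖ * ‖h t‖ := norm_mul _ _
        _ ≤ Real.exp (‖z₀‖ * R) * ‖h t‖ :=
            mul_le_mul_of_nonneg_right hb (norm_nonneg _)
  set bound : ℝ → ℝ := fun t => (R * Real.exp ((‖z₀‖ + 1) * R)) * ‖h t‖ with hbound
  have hboundint : Integrable bound volume := hint.norm.const_mul _
  have hble : ∀ᵐ t : ℝ, ∀ z ∈ Metric.ball z₀ 1, ‖F' z t‖ ≤ bound t := by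
    refine Filter.Eventually.of_forall fun t => fun z hz => ?_
    by_cases ht : h t = 0
    · simp [hF', ht, hbound]
    · have htR := hsmall t ht
      have hzn : ‖z‖ ≤ ‖z₀‖ + 1 := by
        have := mem_ball_iff_norm.1 hz
        calc ‖z‖ = ‖z₀ + (z - z₀)‖ := by ring_nf
          _ ≤ ‖z₀‖ + ‖z - z₀‖ := norm_add_le _ _
          _ ≤ ‖z₀‖ + 1 := by linarith
      have h1 : ‖Complex.exp (Complex.I * z * t)‖ ≤ Real.exp ((‖z₀‖ + 1) * R) := by
        refine (norm_exp_aux z t).trans (Real.exp_le_exp.2 ?_)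
        nlinarith [norm_nonneg z, abs_nonneg t]
      have h2 : ‖(Complex.I * (t : ℂ))‖ = |t| := by
        simp
      calc ‖F' z t‖ = ‖Complex.exp (Complex.I * z * t)‖ * ‖(Complex.I * (t : ℂ))‖ * ‖h t‖ := by
            simp [hF', norm_mul]
        _ ≤ Real.exp ((‖z₀‖ + 1) * R) * R * ‖h t‖ := by
            rw [h2]
            exact mul_le_mul_of_nonneg_right
              (mul_le_mul h1 htR (abs_nonneg t) (Real.exp_nonneg _)) (norm_nonneg _)
        _ = bound t := by rw [hbound]; ring
  have hderiv : ∀ᵐ t : ℝ, ∀ z ∈ Metric.ball z₀ 1,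
      HasDerivAt (fun z => F z t) (F' z t) z := by
    refine Filter.Eventually.of_forall fun t z _ => ?_
    have h0 : HasDerivAt (fun z : ℂ => Complex.I * z * t) (Complex.I * t) z := by
      simpa using ((hasDerivAt_id z).const_mul Complex.I).mul_const (t : ℂ)
    exact (h0.cexp.mul_const (h t))
  have := hasDerivAt_integral_of_dominated_loc_of_deriv_le (F := F) (F' := F')
    (Metric.ball_mem_nhds z₀ one_pos) (Filter.Eventually.of_forall hmeas) hFint hmeas' hble hboundint hderiv
  exact this.2.differentiableAt

lemma oneDim_vanish (h : ℝ → ℂ) (hint : Integrable h) (hsupp : HasCompactSupport h)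
    {a : ℝ} (ha : 0 < a)
    (hzero : ∀ τ : ℝ, |τ| ≤ a → (∫ t : ℝ, Complex.exp (Complex.I * τ * t) * h t) = 0) :
    ∀ τ : ℝ, (∫ t : ℝ, Complex.exp (Complex.I * τ * t) * h t) = 0 := by
  set G : ℂ → ℂ := fun z => ∫ t : ℝ, Complex.exp (Complex.I * z * t) * h t with hG
  have hdiff : Differentiable ℂ G := entire_aux h hint hsupp
  have hAn : AnalyticOnNhd ℂ G Set.univ :=
    hdiff.differentiableOn.analyticOnNhd isOpen_univ
  have hfreq : ∃ᶠ z in 𝓝[≠] (0 : ℂ), G z = 0 := by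
    have hu : Filter.Tendsto (fun k : ℕ => ((a / (k + 1) : ℝ) : ℂ)) atTop (𝓝[≠] (0 : ℂ)) := by
      apply tendsto_nhdsWithin_of_tendsto_nhds_of_eventually_within
      · have : Filter.Tendsto (fun k : ℕ => (a / (k + 1) : ℝ)) atTop (𝓝 0) :=
          tendsto_const_nhds.div_atTop (tendsto_natCast_atTop_atTop.atTop_add tendsto_const_nhds)
        have h2 := (Complex.continuous_ofReal.tendsto 0).comp this
        rw [Complex.ofReal_zero] at h2
        exact h2
      · refine Filter.Eventually.of_forall fun k => ?_
        have : (0:ℝ) < a / (k + 1) := by positivity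
        simp only [Set.mem_compl_iff, Set.mem_singleton_iff]
        exact_mod_cast ne_of_gt (by exact_mod_cast this)
    refine hu.frequently (Filter.Frequently.of_forall fun k => ?_)
    have hle : |a / (k + 1 : ℝ)| ≤ a := by
      rw [abs_of_pos (by positivity)]
      rw [div_le_iff₀ (by positivity)]
      nlinarith [ha.le]
    exact hzero _ hle
  have hzero' : Set.EqOn G 0 Set.univ :=
    hAn.eqOn_zero_of_preconnected_of_frequently_eq_zero isPreconnected_univ
      (Set.mem_univ 0) hfreq
  intro τ
  exact hzero' (Set.mem_univ (τ : ℂ))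
lemma step1 (n : ℕ) (hn : 1 ≤ n)
    (β : ℝ × EuclideanSpace ℝ (Fin n) → ℂ) (hβ : Integrable β)
    (hβs : HasCompactSupport β)
    (h : ∀ ζ : ℝ × EuclideanSpace ℝ (Fin n), |ζ.1| ≤ ‖ζ.2‖ →
      (∫ z : ℝ × EuclideanSpace ℝ (Fin n),
        Complex.exp (Complex.I * ((ζ.1 * z.1 + ⟪ζ.2, z.2⟫ : ℝ) : ℂ)) * β z) = 0) :
    ∀ ζ : ℝ × EuclideanSpace ℝ (Fin n),
      (∫ z : ℝ × EuclideanSpace ℝ (Fin n),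
        Complex.exp (Complex.I * ((ζ.1 * z.1 + ⟪ζ.2, z.2⟫ : ℝ) : ℂ)) * β z) = 0 := by
  have hbm : ∀ (c : ℝ × EuclideanSpace ℝ (Fin n) → ℝ), Continuous c →
      Integrable (fun z => Complex.exp (Complex.I * (c z : ℂ)) * β z) := by
    intro c hc
    refine hβ.bdd_mul (c := 1) ?_ (Filter.Eventually.of_forall fun z => ?_)
    · exact (Complex.continuous_exp.comp
        (continuous_const.mul (Complex.continuous_ofReal.comp hc))).aestronglyMeasurable
    · simp [Complex.norm_exp, Complex.mul_re]
  have hphase : ∀ (τ : ℝ) (ξ : EuclideanSpace ℝ (Fin n)),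
      Continuous (fun z : ℝ × EuclideanSpace ℝ (Fin n) => τ * z.1 + ⟪ξ, z.2⟫) := by
    intro τ ξ
    exact (continuous_const.mul continuous_fst).add
      (Continuous.inner continuous_const continuous_snd)
  have hsplit : ∀ (τ : ℝ) (ξ : EuclideanSpace ℝ (Fin n)),
      (∫ z : ℝ × EuclideanSpace ℝ (Fin n),
          Complex.exp (Complex.I * ((τ * z.1 + ⟪ξ, z.2⟫ : ℝ) : ℂ)) * β z)
      = ∫ t : ℝ, Complex.exp (Complex.I * (τ : ℂ) * (t : ℂ)) *
          (∫ x : EuclideanSpace ℝ (Fin n),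
            Complex.exp (Complex.I * ((⟪ξ, x⟫ : ℝ) : ℂ)) * β (t, x)) := by
    intro τ ξ
    have hint1 : Integrable (fun z : ℝ × EuclideanSpace ℝ (Fin n) =>
        Complex.exp (Complex.I * ((τ * z.1 + ⟪ξ, z.2⟫ : ℝ) : ℂ)) * β z)
        ((volume : Measure ℝ).prod (volume : Measure (EuclideanSpace ℝ (Fin n)))) := by
      rw [← MeasureTheory.Measure.volume_eq_prod]
      exact hbm _ (hphase τ ξ)
    calc (∫ z : ℝ × EuclideanSpace ℝ (Fin n),
            Complex.exp (Complex.I * ((τ * z.1 + ⟪ξ, z.2⟫ : ℝ) : ℂ)) * β z)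
        = ∫ z : ℝ × EuclideanSpace ℝ (Fin n),
            Complex.exp (Complex.I * ((τ * z.1 + ⟪ξ, z.2⟫ : ℝ) : ℂ)) * β z
            ∂((volume : Measure ℝ).prod (volume : Measure (EuclideanSpace ℝ (Fin n)))) := by
          rw [← MeasureTheory.Measure.volume_eq_prod]
      _ = ∫ t : ℝ, ∫ x : EuclideanSpace ℝ (Fin n),
            Complex.exp (Complex.I * ((τ * t + ⟪ξ, x⟫ : ℝ) : ℂ)) * β (t, x) := by
          rw [integral_prod _ hint1]
      _ = ∫ t : ℝ, Complex.exp (Complex.I * (τ : ℂ) * (t : ℂ)) *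
            (∫ x : EuclideanSpace ℝ (Fin n),
              Complex.exp (Complex.I * ((⟪ξ, x⟫ : ℝ) : ℂ)) * β (t, x)) := by
          congr 1
          ext t
          rw [← MeasureTheory.integral_const_mul]
          congr 1
          ext x
          rw [← mul_assoc, ← Complex.exp_add]
          congr 1
          push_cast
          ring
  have key : ∀ (ξ : EuclideanSpace ℝ (Fin n)), ξ ≠ 0 → ∀ τ : ℝ,
      (∫ z : ℝ × EuclideanSpace ℝ (Fin n),
        Complex.exp (Complex.I * ((τ * z.1 + ⟪ξ, z.2⟫ : ℝ) : ℂ)) * β z) = 0 := by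
    intro ξ hξ τ
    set hfun : ℝ → ℂ := fun t => ∫ x : EuclideanSpace ℝ (Fin n),
      Complex.exp (Complex.I * ((⟪ξ, x⟫ : ℝ) : ℂ)) * β (t, x) with hhfun
    have hint2 : Integrable hfun := by
      have h1 : Integrable (fun z : ℝ × EuclideanSpace ℝ (Fin n) =>
          Complex.exp (Complex.I * ((⟪ξ, z.2⟫ : ℝ) : ℂ)) * β z)
          ((volume : Measure ℝ).prod (volume : Measure (EuclideanSpace ℝ (Fin n)))) := by
        rw [← MeasureTheory.Measure.volume_eq_prod]
        exact hbm (fun z => ⟪ξ, z.2⟫) (Continuous.inner continuous_const continuous_snd)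
      exact h1.integral_prod_left
    have hsupp2 : HasCompactSupport hfun := by
      refine HasCompactSupport.intro (hβs.image continuous_fst) ?_
      intro t ht
      have hz : ∀ x : EuclideanSpace ℝ (Fin n), β (t, x) = 0 := by
        intro x
        by_contra hc
        exact ht ⟨(t, x), subset_tsupport β hc, rfl⟩
      simp [hhfun, hz]
    have hzero : ∀ σ : ℝ, |σ| ≤ ‖ξ‖ →
        (∫ t : ℝ, Complex.exp (Complex.I * (σ : ℂ) * (t : ℂ)) * hfun t) = 0 := by
      intro σ hσ
      rw [hhfun, ← hsplit σ ξ]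
      exact h (σ, ξ) hσ
    have hv := oneDim_vanish hfun hint2 hsupp2 (norm_pos_iff.2 hξ) hzero τ
    rw [hsplit τ ξ]
    exact hv
  rintro ⟨τ, ξ⟩
  by_cases hξ : ξ ≠ 0
  · exact key ξ hξ τ
  · push_neg at hξ
    subst hξ
    obtain ⟨v, hv1⟩ : ∃ v : EuclideanSpace ℝ (Fin n), ‖v‖ = 1 :=
      ⟨EuclideanSpace.single ⟨0, hn⟩ (1 : ℝ), by simp [EuclideanSpace.norm_single]⟩
    have hvne : v ≠ 0 := by
      intro h0; rw [h0, norm_zero] at hv1; norm_num at hv1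
    set ξk : ℕ → EuclideanSpace ℝ (Fin n) := fun k => ((k : ℝ) + 1)⁻¹ • v with hξk
    have hξkne : ∀ k, ξk k ≠ 0 := by
      intro k
      exact smul_ne_zero (by positivity) hvne
    have hlim : Tendsto (fun k : ℕ =>
        ∫ z : ℝ × EuclideanSpace ℝ (Fin n),
          Complex.exp (Complex.I * ((τ * z.1 + ⟪ξk k, z.2⟫ : ℝ) : ℂ)) * β z)
        atTop (𝓝 (∫ z : ℝ × EuclideanSpace ℝ (Fin n),
          Complex.exp (Complex.I * ((τ * z.1 + ⟪(0 : EuclideanSpace ℝ (Fin n)), z.2⟫ : ℝ) : ℂ))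
            * β z)) := by
      apply tendsto_integral_filter_of_dominated_convergence (fun z => ‖β z‖)
      · refine Filter.Eventually.of_forall fun k => ?_
        exact ((Complex.continuous_exp.comp (continuous_const.mul
          (Complex.continuous_ofReal.comp (hphase τ (ξk k))))).aestronglyMeasurable).mul hβ.1
      · refine Filter.Eventually.of_forall fun k => Filter.Eventually.of_forall fun z => ?_
        rw [norm_mul]
        have h1 : ‖Complex.exp (Complex.I * ((τ * z.1 + ⟪ξk k, z.2⟫ : ℝ) : ℂ))‖ = 1 := by
          simp [Complex.norm_exp, Complex.mul_re]
        rw [h1, one_mul]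
      · exact hβ.norm
      · refine Filter.Eventually.of_forall fun z => ?_
        have h1 : Tendsto (fun k : ℕ => (⟪ξk k, z.2⟫ : ℝ)) atTop (𝓝 0) := by
          have he : ∀ k : ℕ, (⟪ξk k, z.2⟫ : ℝ) = ((k : ℝ) + 1)⁻¹ * ⟪v, z.2⟫ := by
            intro k
            simp [hξk, real_inner_smul_left, Finset.mul_sum, mul_assoc]
          rw [funext he]
          have h2 : Tendsto (fun k : ℕ => ((k : ℝ) + 1)⁻¹) atTop (𝓝 0) :=
            tendsto_one_div_add_atTop_nhds_zero_nat.congr (fun k => by rw [one_div])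
          simpa using h2.mul_const _
        have h2 : Tendsto (fun k : ℕ => (τ * z.1 + ⟪ξk k, z.2⟫ : ℝ)) atTop
            (𝓝 (τ * z.1 + ⟪(0 : EuclideanSpace ℝ (Fin n)), z.2⟫)) := by
          have h3 := (tendsto_const_nhds (x := τ * z.1) (f := (atTop : Filter ℕ))).add h1
          simpa using h3
        have hcont : Continuous (fun r : ℝ => Complex.exp (Complex.I * (r : ℂ)) * β z) :=
          (Complex.continuous_exp.comp
            (continuous_const.mul Complex.continuous_ofReal)).mul continuous_const
        exact (hcont.tendsto _).comp h2
    have hzk : ∀ k : ℕ,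
        (∫ z : ℝ × EuclideanSpace ℝ (Fin n),
          Complex.exp (Complex.I * ((τ * z.1 + ⟪ξk k, z.2⟫ : ℝ) : ℂ)) * β z) = 0 :=
      fun k => key (ξk k) (hξkne k) τ
    have hlim0 : Tendsto (fun _ : ℕ => (0 : ℂ)) atTop
        (𝓝 (∫ z : ℝ × EuclideanSpace ℝ (Fin n),
          Complex.exp (Complex.I * ((τ * z.1 + ⟪(0 : EuclideanSpace ℝ (Fin n)), z.2⟫ : ℝ) : ℂ))
            * β z)) := by
      rw [← funext hzk]
      exact hlim
    exact (tendsto_nhds_unique tendsto_const_nhds hlim0).symm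
noncomputable def Phim (n : ℕ) : EuclideanSpace ℝ (Fin (n+1)) ≃ᵐ ℝ × EuclideanSpace ℝ (Fin n) :=
  (MeasurableEquiv.toLp 2 (Fin (n+1) → ℝ)).symm.trans
    ((MeasurableEquiv.piFinSuccAbove (fun _ : Fin (n+1) => ℝ) 0).trans
      ((MeasurableEquiv.refl ℝ).prodCongr (MeasurableEquiv.toLp 2 (Fin n → ℝ)).symm.symm))

lemma Phim_apply (n : ℕ) (y : EuclideanSpace ℝ (Fin (n+1))) :
    Phim n y = (y 0, WithLp.toLp 2 (fun i : Fin n => y i.succ)) := by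
  unfold Phim
  simp [MeasurableEquiv.piFinSuccAbove, Fin.succAbove]
  rfl

lemma Phim_measurePreserving (n : ℕ) : MeasurePreserving (Phim n) volume volume := by
  have h1 := EuclideanSpace.volume_preserving_symm_measurableEquiv_toLp (Fin (n+1))
  have h2 := MeasureTheory.volume_preserving_piFinSuccAbove (fun _ : Fin (n+1) => ℝ) 0
  have h4 := (EuclideanSpace.volume_preserving_symm_measurableEquiv_toLp (Fin n)).symm
    ((MeasurableEquiv.toLp 2 (Fin n → ℝ)).symm)
  have h3 : MeasurePreserving
      (⇑((MeasurableEquiv.refl ℝ).prodCongr (MeasurableEquiv.toLp 2 (Fin n → ℝ)).symm.symm))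
      volume volume := by
    rw [MeasureTheory.Measure.volume_eq_prod, MeasureTheory.Measure.volume_eq_prod]
    exact (MeasurePreserving.id volume).prod h4
  exact (h3.comp h2).comp h1

lemma inner_split (n : ℕ) (w y : EuclideanSpace ℝ (Fin (n+1))) :
    (⟪w, y⟫ : ℝ) = (Phim n w).1 * (Phim n y).1 + ⟪(Phim n w).2, (Phim n y).2⟫ := by
  rw [Phim_apply, Phim_apply]
  simp only [PiLp.inner_apply, RCLike.inner_apply, conj_trivial]
  rw [Fin.sum_univ_succ]; ring

/-- If `β : ℝ^{1+n} → ℂ` is integrable with compact support and its Fourier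
transform `β̂(τ,ξ) = ∫ e^{i(τt + ⟪ξ,x⟫)} β(t,x) dt dx` vanishes for every space-like
vector `(τ,ξ)` with `|τ| ≤ ‖ξ‖`, then `β = 0` almost everywhere. -/
theorem statement3 (n : ℕ) (hn : 1 ≤ n)
    (β : ℝ × EuclideanSpace ℝ (Fin n) → ℂ) (hβ : Integrable β)
    (hβs : HasCompactSupport β)
    (h : ∀ ζ : ℝ × EuclideanSpace ℝ (Fin n), |ζ.1| ≤ ‖ζ.2‖ →
      (∫ z : ℝ × EuclideanSpace ℝ (Fin n),
        Complex.exp (Complex.I * ((ζ.1 * z.1 + ⟪ζ.2, z.2⟫ : ℝ) : ℂ)) * β z) = 0) :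
    ∀ᵐ z : ℝ × EuclideanSpace ℝ (Fin n), β z = 0 := by
  have hF := step1 n hn β hβ hβs h
  have hΦ : MeasurePreserving (Phim n) volume volume := Phim_measurePreserving n
  set f : EuclideanSpace ℝ (Fin (n+1)) → ℂ := fun y => β (Phim n y) with hfdef
  have hf : Integrable f := by
    have := (hΦ.integrable_comp_emb (Phim n).measurableEmbedding (g := β)).2 hβ
    exact this
  have h0 : ∀ w : EuclideanSpace ℝ (Fin (n+1)), 𝓕 f w = 0 := by
    intro w
    rw [Real.fourier_eq]
    set ζ : ℝ × EuclideanSpace ℝ (Fin n) :=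
      (-(2 * Real.pi) * (Phim n w).1, (-(2 * Real.pi)) • (Phim n w).2) with hζ
    set g : ℝ × EuclideanSpace ℝ (Fin n) → ℂ := fun z =>
      Complex.exp (Complex.I * ((ζ.1 * z.1 + ⟪ζ.2, z.2⟫ : ℝ) : ℂ)) * β z with hg
    have hpt : ∀ v : EuclideanSpace ℝ (Fin (n+1)),
        (Real.fourierChar (-⟪v, w⟫) : Circle) • f v = g (Phim n v) := by
      intro v
      rw [Circle.smul_def, Real.fourierChar_apply, smul_eq_mul]
      rw [hg]
      have hre : 2 * Real.pi * -(⟪v, w⟫ : ℝ)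
          = ζ.1 * (Phim n v).1 + ⟪ζ.2, (Phim n v).2⟫ := by
        rw [inner_split n v w, hζ]
        simp only [real_inner_smul_left]
        rw [real_inner_comm]
        ring
      beta_reduce
      rw [hre, mul_comm Complex.I
        (((ζ.1 * ((Phim n) v).1 + ⟪ζ.2, ((Phim n) v).2⟫ : ℝ) : ℂ))]
    calc (∫ v : EuclideanSpace ℝ (Fin (n+1)),
            (Real.fourierChar (-⟪v, w⟫) : Circle) • f v)
        = ∫ v : EuclideanSpace ℝ (Fin (n+1)), g (Phim n v) := by
          refine integral_congr_ae (Filter.Eventually.of_forall fun v => ?_)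
          exact hpt v
      _ = ∫ z : ℝ × EuclideanSpace ℝ (Fin n), g z :=
          hΦ.integral_comp (Phim n).measurableEmbedding g
      _ = 0 := hF ζ
  have hzero : ∀ᵐ y : EuclideanSpace ℝ (Fin (n+1)), f y = 0 := fourier_inj f hf h0
  have hmap : (volume : Measure (ℝ × EuclideanSpace ℝ (Fin n)))
      = Measure.map (Phim n) volume := hΦ.map_eq.symm
  rw [hmap, (Phim n).measurableEmbedding.ae_map_iff]
  exact hzero
end

section
/- Let n ≥ 2 and let β : ℝ^{1+n} → ℂ be continuous with compact support. If ∫_ℝ β(t, y − tω) dt = 0 for every y ∈ ℝⁿ and every unit vector ω ∈ ℝⁿ, then β(t,x) = 0 for all (t,x) ∈ ℝ^{1+n}. -/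
open MeasureTheory Filter
open scoped RealInnerProductSpace Real FourierTransform Topology

set_option maxHeartbeats 1000000

noncomputable def ep (r : ℝ) : ℂ := Complex.exp ((-2 * π * r : ℝ) * Complex.I)

lemma ep_norm (r : ℝ) : ‖ep r‖ = 1 := by
  simp [ep, Complex.norm_exp]

lemma ep_add (a b : ℝ) : ep (a + b) = ep a * ep b := by
  rw [ep, ep, ep, ← Complex.exp_add]; congr 1; push_cast; ring

lemma ep_continuous : Continuous ep := by
  unfold ep; fun_prop

lemma integrable_ep_smul {α : Type*} [MeasurableSpace α] {μ : Measure α} {φ : α → ℝ}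
    (hφ : AEStronglyMeasurable φ μ) {g : α → ℂ} (hg : Integrable g μ) :
    Integrable (fun v => ep (φ v) • g v) μ := by
  have hm : AEStronglyMeasurable (fun v => ep (φ v) • g v) μ :=
    (ep_continuous.comp_aestronglyMeasurable hφ).smul hg.1
  exact (hg.norm.mono' hm (ae_of_all _ fun v => by
      rw [norm_smul, ep_norm, one_mul])).congr
    (ae_of_all _ fun v => rfl)

lemma exists_unit_inner {n : ℕ} (hn : 2 ≤ n) (ξ : EuclideanSpace ℝ (Fin n)) (hξ : ξ ≠ 0)
    (τ : ℝ) (hτ : |τ| ≤ ‖ξ‖) :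
    ∃ ω : EuclideanSpace ℝ (Fin n), ‖ω‖ = 1 ∧ ⟪ω, ξ⟫ = τ := by
  have hξn : (0:ℝ) < ‖ξ‖ := norm_pos_iff.2 hξ
  obtain ⟨e, he1, he2⟩ : ∃ e : EuclideanSpace ℝ (Fin n), ‖e‖ = 1 ∧ ⟪e, ξ⟫ = 0 := by
    have h1 : Module.finrank ℝ (ℝ ∙ ξ) = 1 := finrank_span_singleton hξ
    have h2 : Module.finrank ℝ (ℝ ∙ ξ) + Module.finrank ℝ ((ℝ ∙ ξ)ᗮ)
        = Module.finrank ℝ (EuclideanSpace ℝ (Fin n)) :=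
      Submodule.finrank_add_finrank_orthogonal _
    rw [h1, finrank_euclideanSpace_fin] at h2
    have h3 : (ℝ ∙ ξ)ᗮ ≠ ⊥ := by
      intro hb
      rw [hb] at h2
      simp at h2
      omega
    obtain ⟨v, hv, hv0⟩ := Submodule.exists_mem_ne_zero_of_ne_bot h3
    refine ⟨‖v‖⁻¹ • v, ?_, ?_⟩
    · simp [norm_smul, abs_of_nonneg, inv_mul_cancel₀ (norm_ne_zero_iff.2 hv0)]
    · have : ⟪ξ, v⟫ = 0 := (Submodule.mem_orthogonal _ _).1 hv ξ (Submodule.mem_span_singleton_self ξ)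
      rw [real_inner_smul_left, real_inner_comm, this, mul_zero]
  set a : ℝ := τ / ‖ξ‖ ^ 2 with ha
  set b : ℝ := Real.sqrt (1 - τ ^ 2 / ‖ξ‖ ^ 2) with hb
  have hb2 : b ^ 2 = 1 - τ ^ 2 / ‖ξ‖ ^ 2 := by
    rw [hb, Real.sq_sqrt]
    have : τ ^ 2 ≤ ‖ξ‖ ^ 2 := by
      rw [← sq_abs]; exact pow_le_pow_left₀ (abs_nonneg _) hτ 2
    have h4 : τ ^ 2 / ‖ξ‖ ^ 2 ≤ 1 := by
      rw [div_le_one (by positivity)]; exact this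
    linarith
  refine ⟨a • ξ + b • e, ?_, ?_⟩
  · have hsq : ‖a • ξ + b • e‖ ^ 2 = 1 := by
      rw [norm_add_sq_real]
      have h5 : ⟪a • ξ, b • e⟫ = 0 := by
        rw [real_inner_smul_left, real_inner_smul_right, real_inner_comm, he2]; ring
      rw [h5, norm_smul, norm_smul, mul_pow, mul_pow, he1]
      have h6 : |a| ^ 2 * ‖ξ‖ ^ 2 = τ ^ 2 / ‖ξ‖ ^ 2 := by
        have hne : ‖ξ‖ ≠ 0 := hξn.ne'
        rw [sq_abs, ha]
        field_simp
      simp only [Real.norm_eq_abs, h6, sq_abs]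
      rw [hb2]
      have hne : ‖ξ‖ ≠ 0 := hξn.ne'
      rw [ha]
      field_simp
      ring
    calc ‖a • ξ + b • e‖ = Real.sqrt (‖a • ξ + b • e‖ ^ 2) := (Real.sqrt_sq (norm_nonneg _)).symm
      _ = Real.sqrt 1 := by rw [hsq]
      _ = 1 := Real.sqrt_one
  · rw [inner_add_left, real_inner_smul_left, real_inner_smul_left, he2,
      real_inner_self_eq_norm_sq]
    rw [ha]; field_simp; simp


lemma core_vanish {n : ℕ}
    (β : ℝ × EuclideanSpace ℝ (Fin n) → ℂ)
    (hβc : Continuous β) (hβs : HasCompactSupport β)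
    (h : ∀ (y ω : EuclideanSpace ℝ (Fin n)), ‖ω‖ = 1 →
      (∫ t : ℝ, β (t, y - t • ω)) = 0)
    {ξ : EuclideanSpace ℝ (Fin n)} {τ : ℝ} (ω : EuclideanSpace ℝ (Fin n))
    (hω : ‖ω‖ = 1) (hωξ : ⟪ω, ξ⟫ = τ) :
    ∫ v : ℝ × EuclideanSpace ℝ (Fin n), ep (τ * v.1 + ⟪v.2, ξ⟫) • β v = 0 := by
  have hβi : Integrable β := hβc.integrable_of_hasCompactSupport hβs
  set F : ℝ × EuclideanSpace ℝ (Fin n) → ℂ := fun v => ep (τ * v.1 + ⟪v.2, ξ⟫) • β v with hF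
  have hphase : Continuous fun v : ℝ × EuclideanSpace ℝ (Fin n) => τ * v.1 + ⟪v.2, ξ⟫ :=
    (continuous_const.mul continuous_fst).add (continuous_snd.inner continuous_const)
  have hFi : Integrable F := integrable_ep_smul hphase.aestronglyMeasurable hβi
  have hβi' : Integrable β (volume.prod volume) := by rwa [← Measure.volume_eq_prod _ _]
  have hFi' : Integrable F (volume.prod volume) := by rwa [← Measure.volume_eq_prod _ _]
  have hshear : MeasurePreserving
      (fun p : ℝ × EuclideanSpace ℝ (Fin n) => (p.1, p.2 - p.1 • ω))
      (volume.prod volume) (volume.prod volume) := by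
    refine (MeasurePreserving.id volume).skew_product ?_
      (ae_of_all _ fun t => (measurePreserving_sub_right volume (t • ω)).map_eq)
    exact (measurable_snd.sub ((measurable_fst.smul measurable_const)))
  have h1 : Integrable (fun p : ℝ × EuclideanSpace ℝ (Fin n) => β (p.1, p.2 - p.1 • ω))
      (volume.prod volume) :=
    (hshear.integrable_comp hβi'.aestronglyMeasurable).2 hβi'
  have hGi : Integrable
      (fun p : ℝ × EuclideanSpace ℝ (Fin n) => ep ⟪p.2, ξ⟫ • β (p.1, p.2 - p.1 • ω))
      (volume.prod volume) :=
    integrable_ep_smul (continuous_snd.inner continuous_const).aestronglyMeasurable h1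
  have key : ∀ t : ℝ, (∫ x, F (t, x)) = ∫ y, ep ⟪y, ξ⟫ • β (t, y - t • ω) := by
    intro t
    rw [← integral_sub_right_eq_self (fun x => F (t, x)) (t • ω)]
    congr 1; funext y
    show ep (τ * t + ⟪y - t • ω, ξ⟫) • β (t, y - t • ω) = ep ⟪y, ξ⟫ • β (t, y - t • ω)
    have harg : τ * t + ⟪y - t • ω, ξ⟫ = ⟪y, ξ⟫ := by
      rw [inner_sub_left, real_inner_smul_left, hωξ]; ring
    rw [harg]
  calc (∫ v : ℝ × EuclideanSpace ℝ (Fin n), F v)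
      = ∫ v, F v ∂(volume.prod volume) := by rw [← Measure.volume_eq_prod _ _]
    _ = ∫ t, ∫ x, F (t, x) := integral_prod F hFi'
    _ = ∫ t, ∫ y, ep ⟪y, ξ⟫ • β (t, y - t • ω) := by simp_rw [key]
    _ = ∫ y, ∫ t, ep ⟪y, ξ⟫ • β (t, y - t • ω) := integral_integral_swap hGi
    _ = ∫ y : EuclideanSpace ℝ (Fin n), ep ⟪y, ξ⟫ • (∫ t, β (t, y - t • ω)) := by
        congr 1; funext y; exact integral_smul _ _
    _ = 0 := by
        have : ∀ y : EuclideanSpace ℝ (Fin n), ep ⟪y, ξ⟫ • (∫ t, β (t, y - t • ω)) = 0 := by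
          intro y; rw [h y ω hω, smul_zero]
        simp_rw [this, integral_zero]


lemma all_tau {n : ℕ} (hn : 2 ≤ n)
    (β : ℝ × EuclideanSpace ℝ (Fin n) → ℂ)
    (hβc : Continuous β) (hβs : HasCompactSupport β)
    (h : ∀ (y ω : EuclideanSpace ℝ (Fin n)), ‖ω‖ = 1 →
      (∫ t : ℝ, β (t, y - t • ω)) = 0)
    (ξ : EuclideanSpace ℝ (Fin n)) (hξ : ξ ≠ 0) (τ : ℝ) :
    ∫ v : ℝ × EuclideanSpace ℝ (Fin n), ep (τ * v.1 + ⟪v.2, ξ⟫) • β v = 0 := by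
  have hβi : Integrable β := hβc.integrable_of_hasCompactSupport hβs
  obtain ⟨R, hR0, hR⟩ : ∃ R : ℝ, 0 ≤ R ∧ ∀ v ∈ tsupport β, ‖v‖ ≤ R := by
    obtain ⟨R, hR⟩ := hβs.isCompact.isBounded.exists_norm_le
    exact ⟨max R 0, le_max_right _ _, fun v hv => (hR v hv).trans (le_max_left _ _)⟩
  set k : ℝ × EuclideanSpace ℝ (Fin n) → ℂ := fun v => ep ⟪v.2, ξ⟫ * β v with hk
  have hkc : Continuous k :=
    (ep_continuous.comp (continuous_snd.inner continuous_const)).mul hβc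
  have hknorm : ∀ v, ‖k v‖ = ‖β v‖ := fun v => by
    rw [hk, norm_mul, ep_norm, one_mul]
  set c : ℝ × EuclideanSpace ℝ (Fin n) → ℂ := fun v => ((-2 * π * v.1 : ℝ) : ℂ) * Complex.I
    with hc
  have hcc : Continuous c := by fun_prop
  have hcnorm : ∀ v, ‖c v‖ = 2 * π * |v.1| := fun v => by
    rw [hc]
    simp only [norm_mul, Complex.norm_real, Real.norm_eq_abs, Complex.norm_I, mul_one]
    simp [abs_of_nonneg Real.pi_pos.le]
  have hre : ∀ (v : ℝ × EuclideanSpace ℝ (Fin n)) (z : ℂ),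
      (c v * z).re = 2 * π * v.1 * z.im := fun v z => by
    rw [hc]; simp [Complex.mul_re]; try ring
  set G : ℂ → ℂ := fun z => ∫ v : ℝ × EuclideanSpace ℝ (Fin n),
    Complex.exp (c v * z) * k v with hG
  have hexparg : ∀ (M : ℝ) (z : ℂ), |z.im| ≤ M → ∀ v : ℝ × EuclideanSpace ℝ (Fin n),
      |v.1| ≤ R → Real.exp ((c v * z).re) ≤ Real.exp (2 * π * R * M) := by
    intro M z hz v hv
    have hM0 : 0 ≤ M := le_trans (abs_nonneg _) hz
    rw [hre]
    apply Real.exp_le_exp.2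
    calc 2 * π * v.1 * z.im ≤ |2 * π * v.1 * z.im| := le_abs_self _
      _ = 2 * π * |v.1| * |z.im| := by
          rw [abs_mul, abs_mul, abs_mul]
          simp [abs_of_nonneg Real.pi_pos.le]
      _ ≤ 2 * π * R * M := by
          have e2 : 2 * π * |v.1| ≤ 2 * π * R :=
            mul_le_mul_of_nonneg_left hv (by positivity)
          exact mul_le_mul e2 hz (abs_nonneg _) (by positivity)
  have hbnd : ∀ (M : ℝ), 0 ≤ M → ∀ (z : ℂ), |z.im| ≤ M →
      ∀ v, ‖Complex.exp (c v * z) * k v‖ ≤ Real.exp (2 * π * R * M) * ‖β v‖ := by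
    intro M hM z hz v
    rcases eq_or_ne (β v) 0 with hb | hb
    · rw [hk]
      simp [hb]
      try positivity
    · have hv1 : |v.1| ≤ R :=
        le_trans (norm_fst_le v) (hR v (subset_tsupport β (by simpa using hb)))
      rw [norm_mul, hknorm, Complex.norm_exp]
      exact mul_le_mul_of_nonneg_right (hexparg M z hz v hv1) (norm_nonneg _)
  have hGdiff : Differentiable ℂ G := by
    intro z₀
    set M : ℝ := ‖z₀‖ + 1 with hM
    have hM0 : 0 ≤ M := by positivity
    have hzim : ∀ z ∈ Metric.ball z₀ 1, |z.im| ≤ M := by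
      intro z hz
      have h1 : |z.im - z₀.im| ≤ ‖z - z₀‖ := by
        rw [← Complex.sub_im]
        exact Complex.abs_im_le_norm _
      have h2 : ‖z - z₀‖ < 1 := by rwa [Metric.mem_ball, dist_eq_norm] at hz
      have h3 : |z₀.im| ≤ ‖z₀‖ :=
        Complex.abs_im_le_norm _
      calc |z.im| = |(z.im - z₀.im) + z₀.im| := by ring_nf
        _ ≤ |z.im - z₀.im| + |z₀.im| := abs_add_le _ _
        _ ≤ M := by rw [hM]; linarith
    have hz₀im : |z₀.im| ≤ M := by
      have h3 : |z₀.im| ≤ ‖z₀‖ :=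
        Complex.abs_im_le_norm _
      rw [hM]; linarith
    have hderiv : ∀ v (z : ℂ), HasDerivAt (fun w => Complex.exp (c v * w) * k v)
        (Complex.exp (c v * z) * c v * k v) z := by
      intro v z
      have h1 : HasDerivAt (fun w : ℂ => c v * w) (c v) z := by
        simpa using (hasDerivAt_id z).const_mul (c v)
      exact (h1.cexp).mul_const (k v)
    have hb2 : ∀ (z : ℂ), |z.im| ≤ M → ∀ v,
        ‖Complex.exp (c v * z) * c v * k v‖
          ≤ (Real.exp (2 * π * R * M) * (2 * π * R)) * ‖β v‖ := by
      intro z hz v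
      rcases eq_or_ne (β v) 0 with hb | hb
      · rw [hk]
        simp [hb]
        try positivity
      · have hv1 : |v.1| ≤ R :=
          le_trans (norm_fst_le v) (hR v (subset_tsupport β (by simpa using hb)))
        rw [norm_mul, norm_mul, hknorm, hcnorm, Complex.norm_exp]
        have e1 := hexparg M z hz v hv1
        have e2 : 2 * π * |v.1| ≤ 2 * π * R :=
          mul_le_mul_of_nonneg_left hv1 (by positivity)
        have e3 : (0:ℝ) ≤ 2 * π * |v.1| := by positivity
        have e5 : (0:ℝ) ≤ ‖β v‖ := norm_nonneg _
        exact mul_le_mul_of_nonneg_right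
          (mul_le_mul e1 e2 e3 (Real.exp_pos _).le) e5
    have hcont : ∀ z : ℂ, Continuous fun v : ℝ × EuclideanSpace ℝ (Fin n) =>
        Complex.exp (c v * z) * k v :=
      fun z => (Complex.continuous_exp.comp (hcc.mul continuous_const)).mul hkc
    have hFint : Integrable (fun v : ℝ × EuclideanSpace ℝ (Fin n) =>
        Complex.exp (c v * z₀) * k v) :=
      ((hβi.norm.const_mul (Real.exp (2 * π * R * M))).mono'
        (hcont z₀).aestronglyMeasurable (ae_of_all _ (hbnd M hM0 z₀ hz₀im)))
    have hF'meas : AEStronglyMeasurable (fun v : ℝ × EuclideanSpace ℝ (Fin n) =>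
        Complex.exp (c v * z₀) * c v * k v) volume :=
      (((Complex.continuous_exp.comp (hcc.mul continuous_const)).mul hcc).mul
        hkc).aestronglyMeasurable
    have key := hasDerivAt_integral_of_dominated_loc_of_deriv_le (μ := volume)
      (F := fun z v => Complex.exp (c v * z) * k v)
      (F' := fun z v => Complex.exp (c v * z) * c v * k v)
      (bound := fun v => (Real.exp (2 * π * R * M) * (2 * π * R)) * ‖β v‖)
      (Metric.ball_mem_nhds z₀ one_pos)
      (Eventually.of_forall fun z => (hcont z).aestronglyMeasurable)
      hFint hF'meas
      (ae_of_all _ fun v z hz => hb2 z (hzim z hz) v)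
      (hβi.norm.const_mul _)
      (ae_of_all _ fun v z _ => hderiv v z)
    exact key.2.differentiableAt
  have hGanal : AnalyticOnNhd ℂ G Set.univ := Complex.analyticOnNhd_univ_iff_differentiable.2 hGdiff
  have hGeq : ∀ s : ℝ, G ↑s
      = ∫ v : ℝ × EuclideanSpace ℝ (Fin n), ep (s * v.1 + ⟪v.2, ξ⟫) • β v := by
    intro s
    have hpt : ∀ v : ℝ × EuclideanSpace ℝ (Fin n),
        Complex.exp (c v * ↑s) * k v = ep (s * v.1 + ⟪v.2, ξ⟫) • β v := by
      intro v
      have h1 : Complex.exp (c v * ↑s) = ep (s * v.1) := by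
        rw [ep, hc]; congr 1; push_cast; ring
      rw [h1, hk, smul_eq_mul, ep_add]
      ring
    rw [hG]
    exact integral_congr_ae (ae_of_all _ hpt)
  have hzero : ∀ s : ℝ, |s| ≤ ‖ξ‖ → G ↑s = 0 := by
    intro s hs
    obtain ⟨ω, hω, hωξ⟩ := exists_unit_inner hn ξ hξ s hs
    rw [hGeq s]
    exact core_vanish β hβc hβs h ω hω hωξ
  have hξ0 : (0:ℝ) < ‖ξ‖ := norm_pos_iff.2 hξ
  have hfreq : ∃ᶠ z in 𝓝[≠] (0:ℂ), G z = 0 := by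
    have hpos : ∀ m : ℕ, 0 < ‖ξ‖ / ((m:ℝ) + 1) := fun m => div_pos hξ0 (by positivity)
    have hdenom : Tendsto (fun m : ℕ => ((m:ℝ) + 1)) atTop atTop :=
      tendsto_atTop_add_const_right atTop 1 tendsto_natCast_atTop_atTop
    have ht1 : Tendsto (fun m : ℕ => ‖ξ‖ / ((m:ℝ) + 1)) atTop (𝓝 0) :=
      Tendsto.div_atTop tendsto_const_nhds hdenom
    have ht2 : Tendsto (fun m : ℕ => ((‖ξ‖ / ((m:ℝ) + 1) : ℝ) : ℂ)) atTop (𝓝 0) := by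
      have h0 := (Complex.continuous_ofReal.tendsto (0:ℝ)).comp ht1
      rw [Complex.ofReal_zero] at h0
      exact h0
    have ht3 : Tendsto (fun m : ℕ => ((‖ξ‖ / ((m:ℝ) + 1) : ℝ) : ℂ)) atTop (𝓝[≠] (0:ℂ)) := by
      apply tendsto_nhdsWithin_of_tendsto_nhds_of_eventually_within _ ht2
      exact Eventually.of_forall fun m => by
        simp only [Set.mem_compl_iff, Set.mem_singleton_iff]
        exact_mod_cast Complex.ofReal_ne_zero.2 (hpos m).ne'
    apply ht3.frequently
    apply Frequently.of_forall
    intro m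
    apply hzero
    rw [abs_of_pos (hpos m)]
    apply div_le_self hξ0.le
    have : (0:ℝ) ≤ (m:ℝ) := Nat.cast_nonneg m
    linarith
  have hGzero : G ↑τ = 0 :=
    hGanal.eqOn_zero_of_preconnected_of_frequently_eq_zero isPreconnected_univ
      (Set.mem_univ (0:ℂ)) hfreq (Set.mem_univ (↑τ : ℂ))
  rw [← hGeq τ]
  exact hGzero


/-- For `n ≥ 2`, if the light ray transform `∫ β(t, y − tω) dt` of a
continuous compactly supported `β : ℝ^{1+n} → ℂ` vanishes for every `y ∈ ℝⁿ` and every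
unit vector `ω ∈ ℝⁿ`, then `β` vanishes identically. -/

theorem statement4 (n : ℕ) (hn : 2 ≤ n)
    (β : ℝ × EuclideanSpace ℝ (Fin n) → ℂ)
    (hβc : Continuous β) (hβs : HasCompactSupport β)
    (h : ∀ (y ω : EuclideanSpace ℝ (Fin n)), ‖ω‖ = 1 →
      (∫ t : ℝ, β (t, y - t • ω)) = 0) :
    ∀ z : ℝ × EuclideanSpace ℝ (Fin n), β z = 0 := by
  rintro ⟨t0, x0⟩
  have hβi : Integrable β := hβc.integrable_of_hasCompactSupport hβs
  have hβi' : Integrable β (volume.prod volume) := by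
    rwa [← Measure.volume_eq_prod _ _]
  -- a uniform bound for β
  obtain ⟨Mβ, hMβ⟩ : ∃ M : ℝ, ∀ v, ‖β v‖ ≤ M := hβs.exists_bound_of_continuous hβc
  have hMβ0 : 0 ≤ Mβ := le_trans (norm_nonneg _) (hMβ (0, 0))
  -- the compact set containing the spatial support
  set K : Set (EuclideanSpace ℝ (Fin n)) := Prod.snd '' tsupport β with hKdef
  have hKcomp : IsCompact K := hβs.image continuous_snd
  have hKx : ∀ t x, β (t, x) ≠ 0 → x ∈ K := by
    intro t x hb
    exact ⟨(t, x), subset_tsupport β (by simpa using hb), rfl⟩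
  -- Step A : for every nonzero frequency ξ, the spatial Fourier transform vanishes for all t
  have hF0 : ∀ ξ : EuclideanSpace ℝ (Fin n), ξ ≠ 0 → ∀ t : ℝ,
      (∫ x : EuclideanSpace ℝ (Fin n), ep ⟪x, ξ⟫ • β (t, x)) = 0 := by
    intro ξ hξ
    set g : ℝ → ℂ := fun t => ∫ x : EuclideanSpace ℝ (Fin n), ep ⟪x, ξ⟫ • β (t, x) with hg
    have hPi : Integrable (fun v : ℝ × EuclideanSpace ℝ (Fin n) => ep ⟪v.2, ξ⟫ • β v)
        (volume.prod volume) :=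
      integrable_ep_smul (continuous_snd.inner continuous_const).aestronglyMeasurable hβi'
    have hgi : Integrable g := hPi.integral_prod_left
    have hgc : Continuous g := by
      rw [hg]
      apply continuous_of_dominated (bound := fun x => Set.indicator K (fun _ => Mβ) x)
      · exact fun t => ((ep_continuous.comp
          (continuous_id.inner continuous_const)).smul
          (hβc.comp (continuous_const.prodMk continuous_id))).aestronglyMeasurable
      · intro t
        apply ae_of_all
        intro x
        rw [norm_smul, ep_norm, one_mul]
        rcases eq_or_ne (β (t, x)) 0 with hb | hb
        · rw [hb, norm_zero]
          exact Set.indicator_apply_nonneg fun _ => hMβ0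
        · rw [Set.indicator_of_mem (hKx t x hb)]
          exact hMβ (t, x)
      · rw [integrable_indicator_iff hKcomp.isClosed.measurableSet]
        exact integrableOn_const hKcomp.measure_lt_top.ne
      · exact ae_of_all _ fun x =>
          Continuous.smul (f := fun _ : ℝ => ep ⟪x, ξ⟫) (g := fun t => β (t, x)) continuous_const (hβc.comp (continuous_id.prodMk continuous_const))
    have hfour : 𝓕 g = 0 := by
      funext τ
      have step1 : 𝓕 g τ = ∫ t : ℝ, ep (τ * t) • g t := by
        rw [Real.fourier_eq']
        apply integral_congr_ae
        apply ae_of_all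
        intro t
        show Complex.exp (((-2 * π * (inner ℝ t τ : ℝ) : ℝ) : ℂ) * Complex.I) • g t
          = ep (τ * t) • g t
        have hin : (inner ℝ t τ : ℝ) = τ * t := by
          rw [RCLike.inner_apply, conj_trivial]
        rw [hin]; rfl
      have step2 : ∀ t : ℝ, ep (τ * t) • g t
          = ∫ x : EuclideanSpace ℝ (Fin n), ep (τ * t + ⟪x, ξ⟫) • β (t, x) := by
        intro t
        rw [hg, ← integral_smul]
        apply integral_congr_ae
        apply ae_of_all
        intro x
        show ep (τ * t) • ep (inner ℝ x ξ) • β (t, x) = ep (τ * t + inner ℝ x ξ) • β (t, x)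
        rw [smul_smul, ← ep_add]
      have step3 : (∫ t : ℝ, ∫ x : EuclideanSpace ℝ (Fin n), ep (τ * t + ⟪x, ξ⟫) • β (t, x))
          = ∫ v : ℝ × EuclideanSpace ℝ (Fin n), ep (τ * v.1 + ⟪v.2, ξ⟫) • β v := by
        rw [show (volume : Measure (ℝ × EuclideanSpace ℝ (Fin n)))
            = volume.prod volume from Measure.volume_eq_prod _ _]
        exact (integral_prod _ (integrable_ep_smul
          ((continuous_const.mul continuous_fst).add
            (continuous_snd.inner continuous_const)).aestronglyMeasurable hβi')).symm
      rw [step1]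
      simp_rw [step2]
      rw [step3, all_tau hn β hβc hβs h ξ hξ τ]
      rfl
    intro t
    have hinv := hgi.fourierInv_fourier_eq (v := t)
      (by rw [hfour]; exact integrable_zero _ _ _) hgc.continuousAt
    rw [hfour] at hinv
    show g t = 0
    rw [← hinv, Real.fourierInv_eq]
    simp
  -- Step B : spatial Fourier inversion at time t0
  set gE : EuclideanSpace ℝ (Fin n) → ℂ := fun x => β (t0, x) with hgE
  have hgEc : Continuous gE := hβc.comp (continuous_const.prodMk continuous_id)
  have hgEs : HasCompactSupport gE := by
    apply HasCompactSupport.of_support_subset_isCompact hKcomp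
    intro x hx
    exact hKx t0 x hx
  have hgEi : Integrable gE := hgEc.integrable_of_hasCompactSupport hgEs
  have hnontriv : Nontrivial (EuclideanSpace ℝ (Fin n)) := by
    refine nontrivial_of_ne (EuclideanSpace.single ⟨0, by omega⟩ (1:ℝ)) 0 ?_
    intro hcontra
    have := congrArg norm hcontra
    rw [EuclideanSpace.norm_single] at this
    simp at this
  have hfourE : 𝓕 gE = 0 := by
    have hcont : Continuous (𝓕 gE) :=
      VectorFourier.fourierIntegral_continuous Real.continuous_fourierChar
        continuous_inner hgEi
    have hne : ∀ ξ : EuclideanSpace ℝ (Fin n), ξ ≠ 0 → 𝓕 gE ξ = 0 := by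
      intro ξ hξ
      rw [Real.fourier_eq']
      exact hF0 ξ hξ t0
    haveI := hnontriv
    apply Continuous.ext_on (dense_compl_singleton (0 : EuclideanSpace ℝ (Fin n)))
      hcont continuous_const
    intro ξ hξ
    exact hne ξ hξ
  have hinv := hgEi.fourierInv_fourier_eq (v := x0)
    (by rw [hfourE]; exact integrable_zero _ _ _) hgEc.continuousAt
  rw [hfourE] at hinv
  rw [show β (t0, x0) = gE x0 from rfl, ← hinv, Real.fourierInv_eq]
  simp
end

section
/- Let n ≥ 1, let ω ∈ ℝⁿ be a unit vector, let h ≠ 0 be real, and let φ : ℝⁿ → ℝ be continuously differentiable. Define u₊(t,x) = e^{−(t+⟨x,ω⟩)/h} φ(x + tω) and u₋(t,x) = e^{(t+⟨x,ω⟩)/h} φ(x + tω). Then for all (t,x): ⟨∇_{t,x}u₊(t,x), ∇_{t,x}u₋(t,x)⟩ = −(2/h²) φ(x+tω)² + ⟨ω, ∇φ(x+tω)⟩² + ‖∇φ(x+tω)‖². -/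
open scoped RealInnerProductSpace

/-- For a unit vector `ω ∈ ℝⁿ`, `h ≠ 0` and `φ : ℝⁿ → ℝ` continuously
differentiable, with `uP(t,x) = e^{−(t+⟪x,ω⟫)/h} φ(x+tω)` and
`uM(t,x) = e^{(t+⟪x,ω⟫)/h} φ(x+tω)`, one has
`⟪∇uP, ∇uM⟫ = −(2/h²) φ(x+tω)² + ⟪ω, ∇φ(x+tω)⟫² + ‖∇φ(x+tω)‖²` at every point.
Here `ℝ^{1+n} = EuclideanSpace ℝ (Fin (n+1))`, coordinate `0` is `t`, the map `X` with
`X z i = z i.succ` recovers `x`, and `∇` (via `gradient`) denotes the full gradient of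
`u±` in all `1+n` variables and `∇φ` the gradient of `φ` on `ℝⁿ`. -/
theorem statement11 (n : ℕ) (hn : 1 ≤ n)
    (ω : EuclideanSpace ℝ (Fin n)) (hω : ‖ω‖ = 1)
    (h : ℝ) (hh : h ≠ 0)
    (φ : EuclideanSpace ℝ (Fin n) → ℝ) (hφ : ContDiff ℝ 1 φ)
    (X : EuclideanSpace ℝ (Fin (n + 1)) → EuclideanSpace ℝ (Fin n))
    (hX : ∀ z i, X z i = z i.succ)
    (uP uM : EuclideanSpace ℝ (Fin (n + 1)) → ℝ)
    (huP : ∀ z, uP z =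
      Real.exp (-(z 0 + ∑ i : Fin n, z i.succ * ω i) / h) * φ (X z + z 0 • ω))
    (huM : ∀ z, uM z =
      Real.exp ((z 0 + ∑ i : Fin n, z i.succ * ω i) / h) * φ (X z + z 0 • ω)) :
    ∀ z : EuclideanSpace ℝ (Fin (n + 1)),
      ⟪gradient uP z, gradient uM z⟫
      = -(2 / h ^ 2) * (φ (X z + z 0 • ω)) ^ 2
        + (⟪ω, gradient φ (X z + z 0 • ω)⟫) ^ 2
        + ‖gradient φ (X z + z 0 • ω)‖ ^ 2 := by
  classical
  have hφd : Differentiable ℝ φ := hφ.differentiable one_ne_zero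
  -- linear maps
  let A : EuclideanSpace ℝ (Fin (n+1)) →L[ℝ] EuclideanSpace ℝ (Fin n) :=
    LinearMap.toContinuousLinearMap
      { toFun := fun z => WithLp.toLp 2 (fun i => z i.succ + z 0 * ω i)
        map_add' := by intro x y; ext i; simp; ring
        map_smul' := by intro c x; ext i; simp; ring }
  let L : EuclideanSpace ℝ (Fin (n+1)) →L[ℝ] ℝ :=
    LinearMap.toContinuousLinearMap
      { toFun := fun z => z 0 + ∑ i : Fin n, z i.succ * ω i
        map_add' := by
          intro x y; simp [Finset.sum_add_distrib, add_mul]; ring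
        map_smul' := by
          intro c x; simp [Finset.mul_sum, mul_add, mul_assoc] }
  have hAapp : ∀ z i, A z i = z i.succ + z 0 * ω i := fun z i => rfl
  have hLapp : ∀ z, L z = z 0 + ∑ i : Fin n, z i.succ * ω i := fun z => rfl
  have hpt : ∀ z : EuclideanSpace ℝ (Fin (n+1)), X z + z 0 • ω = A z := by
    intro z; ext i
    have : (X z + z 0 • ω) i = X z i + z 0 * ω i := rfl
    rw [this, hX, hAapp]
  have huP' : uP = fun z => Real.exp ((-h⁻¹) * L z) * φ (A z) := by
    funext z; rw [huP, hpt, hLapp]; congr 1; congr 1; ring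
  have huM' : uM = fun z => Real.exp (h⁻¹ * L z) * φ (A z) := by
    funext z; rw [huM, hpt, hLapp]; congr 1; congr 1; ring
  -- fderiv of uP and uM
  intro z
  have hφA : HasFDerivAt (fun w => φ (A w)) ((fderiv ℝ φ (A z)).comp A) z :=
    ((hφd (A z)).hasFDerivAt).comp z A.hasFDerivAt
  have hEP : HasFDerivAt (fun w => Real.exp ((-h⁻¹) * L w))
      (Real.exp ((-h⁻¹) * L z) • ((-h⁻¹) • (L : EuclideanSpace ℝ (Fin (n+1)) →L[ℝ] ℝ))) z :=
    (L.hasFDerivAt.const_mul (-h⁻¹)).exp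
  have hEM : HasFDerivAt (fun w => Real.exp (h⁻¹ * L w))
      (Real.exp (h⁻¹ * L z) • (h⁻¹ • (L : EuclideanSpace ℝ (Fin (n+1)) →L[ℝ] ℝ))) z :=
    (L.hasFDerivAt.const_mul h⁻¹).exp
  have hDP : fderiv ℝ uP z =
      Real.exp ((-h⁻¹) * L z) • ((fderiv ℝ φ (A z)).comp A)
        + φ (A z) • (Real.exp ((-h⁻¹) * L z) • ((-h⁻¹) • (L : EuclideanSpace ℝ (Fin (n+1)) →L[ℝ] ℝ))) := by
    rw [huP']; exact (hEP.mul hφA).fderiv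
  have hDM : fderiv ℝ uM z =
      Real.exp (h⁻¹ * L z) • ((fderiv ℝ φ (A z)).comp A)
        + φ (A z) • (Real.exp (h⁻¹ * L z) • (h⁻¹ • (L : EuclideanSpace ℝ (Fin (n+1)) →L[ℝ] ℝ))) := by
    rw [huM']; exact (hEM.mul hφA).fderiv
  -- gradient facts
  have hgrad : ∀ (m : ℕ) (f : EuclideanSpace ℝ (Fin m) → ℝ) (p v : EuclideanSpace ℝ (Fin m)),
      ⟪gradient f p, v⟫ = fderiv ℝ f p v := by
    intro m f p v
    rw [gradient, InnerProductSpace.toDual_symm_apply]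
  set g : EuclideanSpace ℝ (Fin n) := gradient φ (A z) with hg
  have hφv : ∀ v, fderiv ℝ φ (A z) v = ⟪g, v⟫ := fun v => (hgrad n φ (A z) v).symm
  have hcoord : ∀ (f : EuclideanSpace ℝ (Fin (n+1)) → ℝ),
      ∀ i, gradient f z i = fderiv ℝ f z (EuclideanSpace.single i (1:ℝ)) := by
    intro f i
    rw [← hgrad (n+1) f z]
    have := EuclideanSpace.inner_single_right (𝕜 := ℝ) i 1 (gradient f z)
    simpa using this.symm
  -- evaluate L and A on basis vectors
  have hL0 : L (EuclideanSpace.single 0 (1:ℝ)) = 1 := by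
    rw [hLapp]
    simp [EuclideanSpace.single_apply, Fin.succ_ne_zero]
  have hA0 : A (EuclideanSpace.single 0 (1:ℝ)) = ω := by
    ext i; rw [hAapp]; simp [EuclideanSpace.single_apply, Fin.succ_ne_zero]
  have hLs : ∀ j : Fin n, L (EuclideanSpace.single j.succ (1:ℝ)) = ω j := by
    intro j; rw [hLapp]
    simp [EuclideanSpace.single_apply, Fin.succ_inj, (Fin.succ_ne_zero j).symm]
  have hAs : ∀ j : Fin n, A (EuclideanSpace.single j.succ (1:ℝ))
      = EuclideanSpace.single j (1:ℝ) := by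
    intro j; ext i; rw [hAapp]
    simp [EuclideanSpace.single_apply, Fin.succ_inj, (Fin.succ_ne_zero j).symm, eq_comm]
  -- coordinates of the two gradients
  set c : ℝ := ⟪g, ω⟫ with hc
  have hcs : c = ∑ x : Fin n, g x * ω x := by
    rw [hc]; simp [PiLp.inner_apply, RCLike.inner_apply, conj_trivial, mul_comm]
  set E₁ : ℝ := Real.exp ((-h⁻¹) * L z) with hE1
  set E₂ : ℝ := Real.exp (h⁻¹ * L z) with hE2
  have hE : E₁ * E₂ = 1 := by
    rw [hE1, hE2, ← Real.exp_add]; simp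
  have hgP0 : gradient uP z 0 = E₁ * c + φ (A z) * (E₁ * ((-h⁻¹) * 1)) := by
    rw [hcoord uP 0, hDP]
    simp [hL0, hA0, hφv, smul_eq_mul]
    exact Or.inl hc.symm
  have hgM0 : gradient uM z 0 = E₂ * c + φ (A z) * (E₂ * (h⁻¹ * 1)) := by
    rw [hcoord uM 0, hDM]
    simp [hL0, hA0, hφv, smul_eq_mul]
    exact Or.inl hc.symm
  have hgPs : ∀ j : Fin n, gradient uP z j.succ
      = E₁ * g j + φ (A z) * (E₁ * ((-h⁻¹) * ω j)) := by
    intro j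
    rw [hcoord uP j.succ, hDP]
    simp [hLs, hAs, hφv, smul_eq_mul, EuclideanSpace.inner_single_right]
  have hgMs : ∀ j : Fin n, gradient uM z j.succ
      = E₂ * g j + φ (A z) * (E₂ * (h⁻¹ * ω j)) := by
    intro j
    rw [hcoord uM j.succ, hDM]
    simp [hLs, hAs, hφv, smul_eq_mul, EuclideanSpace.inner_single_right]
  -- assemble
  have hip : ⟪gradient uP z, gradient uM z⟫
      = ∑ i : Fin (n+1), gradient uP z i * gradient uM z i := by
    rw [PiLp.inner_apply]; simp [RCLike.inner_apply, conj_trivial, mul_comm]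
  have hsumω : ∑ j : Fin n, ω j * ω j = 1 := by
    have : ⟪ω, ω⟫ = ‖ω‖ ^ 2 := real_inner_self_eq_norm_sq ω
    rw [hω] at this
    rw [PiLp.inner_apply] at this
    simpa [RCLike.inner_apply, conj_trivial, sq] using this
  have hnormg : ‖g‖ ^ 2 = ∑ j : Fin n, g j * g j := by
    have : ⟪g, g⟫ = ‖g‖ ^ 2 := real_inner_self_eq_norm_sq g
    rw [← this]
    rw [PiLp.inner_apply]; simp [RCLike.inner_apply, conj_trivial, sq]
  have hiωg : ⟪ω, g⟫ = c := (real_inner_comm ω g).symm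
  rw [hpt, ← hg, hiωg, hip, Fin.sum_univ_succ, hgP0, hgM0]
  have hterm : ∀ j : Fin n,
      gradient uP z j.succ * gradient uM z j.succ
      = g j * g j - h⁻¹^2 * (ω j * ω j) * φ (A z) ^ 2 := by
    intro j
    rw [hgPs j, hgMs j]
    have : (E₁ * g j + φ (A z) * (E₁ * ((-h⁻¹) * ω j)))
        * (E₂ * g j + φ (A z) * (E₂ * (h⁻¹ * ω j)))
        = (E₁ * E₂) * (g j * g j - h⁻¹^2 * (ω j * ω j) * φ (A z) ^ 2) := by ring
    rw [this, hE, one_mul]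
  rw [Finset.sum_congr rfl (fun j _ => hterm j), Finset.sum_sub_distrib, hnormg]
  have : ∑ j : Fin n, h⁻¹^2 * (ω j * ω j) * φ (A z) ^ 2
      = h⁻¹^2 * φ (A z) ^ 2 := by
    rw [← Finset.sum_mul, ← Finset.mul_sum, hsumω]; ring
  rw [this]
  have hcc : (E₁ * c + φ (A z) * (E₁ * (-h⁻¹ * 1))) * (E₂ * c + φ (A z) * (E₂ * (h⁻¹ * 1)))
      = (E₁ * E₂) * (c * c - h⁻¹^2 * φ (A z) ^ 2) := by ring
  rw [hcc, hE, one_mul]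
  field_simp
  ring
end
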